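/- Let A be a finite set with |A| = k, let n be a positive integer, and let (a_1,…,a_{2n}) ∈ A^{2n}. Then the number of permutations π of {1,…,2n} with the property that for all i, j ∈ {1,…,2n}: a_i = a_j implies that π(i) and π(j) are either both in {1,…,n} or both in {n+1,…,2n}, is at most n!·n!·2^k. -/

import Mathlib

/-- An algebra: a carrier type `A` together with an indexed family of finitary operations. -/
structure MyAlgebra (A : Type) where
  ι : Type
  arity : ι → ℕ
  op : ∀ i : ι, (Fin (arity i) → A) → A

namespace MyAlgebra

variable {A : Type}

/-- A set of `n`-tuples is closed under coordinatewise application of all operations. -/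
def Closed (𝔸 : MyAlgebra A) {n : ℕ} (S : Set (Fin n → A)) : Prop :=
  ∀ i : 𝔸.ι, ∀ γ : Fin (𝔸.arity i) → (Fin n → A),
    (∀ j, γ j ∈ S) → (fun t : Fin n => 𝔸.op i (fun j => γ j t)) ∈ S

/-- The subalgebra of `𝔸^n` generated by `X`. -/
def gen (𝔸 : MyAlgebra A) {n : ℕ} (X : Set (Fin n → A)) : Set (Fin n → A) :=
  ⋂₀ {S : Set (Fin n → A) | X ⊆ S ∧ 𝔸.Closed S}

/-- Polynomially generated powers. -/
def PGP (𝔸 : MyAlgebra A) : Prop :=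
  ∃ p : Polynomial ℕ, ∀ n : ℕ, ∃ X : Finset (Fin n → A),
    X.card ≤ p.eval n ∧ 𝔸.gen (X : Set (Fin n → A)) = Set.univ

/-- Exponentially generated powers. -/
def EGP (𝔸 : MyAlgebra A) : Prop :=
  ∃ b C : ℝ, 1 < b ∧ 0 < C ∧ ∀ n : ℕ, ∀ X : Finset (Fin n → A),
    𝔸.gen (X : Set (Fin n → A)) = Set.univ → C * b ^ n ≤ (X.card : ℝ)

/-- Every operation is idempotent. -/
def Idempotent (𝔸 : MyAlgebra A) : Prop :=
  ∀ i : 𝔸.ι, ∀ a : A, 𝔸.op i (fun _ => a) = a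

end MyAlgebra

/-- The number of switches of a tuple: indices `i` with `a i ≠ a (i+1)`,
encoded as pairs of consecutive indices. -/
def numSwitches {A : Type} [DecidableEq A] {n : ℕ} (a : Fin n → A) : ℕ :=
  (Finset.univ.filter (fun p : Fin n × Fin n =>
    (p.2 : ℕ) = (p.1 : ℕ) + 1 ∧ a p.1 ≠ a p.2)).card

/-- `𝔸` is switchable: for some `r`, every power is generated by tuples with at most `r` switches. -/
def MyAlgebra.Switchable {A : Type} [DecidableEq A] (𝔸 : MyAlgebra A) : Prop :=
  ∃ r : ℕ, ∀ n : ℕ, 𝔸.gen {a : Fin n → A | numSwitches a ≤ r} = Set.univ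

/-- A nice relation: not full, and contains every tuple with two equal consecutive entries. -/
def Nice {A : Type} {m : ℕ} (ρ : Set (Fin m → A)) : Prop :=
  ρ ≠ Set.univ ∧ ∀ c : Fin m → A,
    (∃ i : ℕ, ∃ h : i + 1 < m, c ⟨i, by omega⟩ = c ⟨i + 1, h⟩) → c ∈ ρ

/-- `D_{A,m}`: tuples of length `2m` where some pair `(a_{2i+1}, a_{2i+2})` is equal. -/
def Drel (A : Type) (m : ℕ) : Set (Fin (2 * m) → A) :=
  {a | ∃ i : ℕ, ∃ h : 2 * i + 1 < 2 * m, a ⟨2 * i, by omega⟩ = a ⟨2 * i + 1, h⟩}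

/-- `f` preserves the relation `σ`. -/
def Preserves {A : Type} {s m : ℕ} (f : (Fin s → A) → A) (σ : Set (Fin m → A)) : Prop :=
  ∀ γ : Fin s → (Fin m → A), (∀ j, γ j ∈ σ) → (fun t : Fin m => f (fun j => γ j t)) ∈ σ

/-- `f` is `αβ`-projective. -/
def ABProjective {A : Type} (α β : Set A) {s : ℕ} (f : (Fin s → A) → A) : Prop :=
  ∃ j : Fin s, ∀ a : Fin s → A, ∀ S ∈ ({α, β} : Set (Set A)), a j ∈ S → f a ∈ S

/-- `σ_n(x₁,…,x_{2n}) ⇔ ρ(x₁,x₂) ∨ … ∨ ρ(x_{2n-1},x_{2n})`. -/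
def sigmaRel {A : Type} (ρ : Set (A × A)) (n : ℕ) : Set (Fin (2 * n) → A) :=
  {t | ∃ i : ℕ, ∃ h : 2 * i + 1 < 2 * n, (t ⟨2 * i, by omega⟩, t ⟨2 * i + 1, h⟩) ∈ ρ}

/-- the number of permutations `π` of `{1,…,2n}` such that equal entries of
`a` are sent to the same half `{1,…,n}` or `{n+1,…,2n}` is at most `n! ⬝ n! ⬝ 2^k`. -/
lemma half_bound {A : Type} [DecidableEq A] (n : ℕ) (a : Fin (2*n) → A) (f : A → Bool) :
    (Finset.univ.filter (fun π : Equiv.Perm (Fin (2*n)) =>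
      ∀ i, ((π i : ℕ) < n ↔ f (a i)))).card ≤ n.factorial * n.factorial := by
  classical
  set T := (Finset.univ.filter (fun π : Equiv.Perm (Fin (2*n)) =>
      ∀ i, ((π i : ℕ) < n ↔ f (a i)))) with hT
  rcases T.eq_empty_or_nonempty with h | ⟨π₀, hπ₀⟩
  · simp [h]
  · have h₀ : ∀ i, ((π₀ i : ℕ) < n ↔ f (a i)) := (Finset.mem_filter.mp hπ₀).2
    have e₁ : {x : Fin (2*n) // (x:ℕ) < n} ≃ Fin n :=
      { toFun := fun x => ⟨x.1, x.2⟩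
        invFun := fun y => ⟨⟨y.1, by omega⟩, by simpa using y.2⟩
        left_inv := fun x => rfl
        right_inv := fun y => rfl }
    have e₂ : {x : Fin (2*n) // ¬ ((x:ℕ) < n)} ≃ Fin n :=
      { toFun := fun x => ⟨(x.1 : ℕ) - n, by have := x.1.isLt; have := x.2; omega⟩
        invFun := fun y => ⟨⟨(y : ℕ) + n, by have := y.isLt; omega⟩, by simp⟩
        left_inv := fun x => Subtype.ext (Fin.ext (by have := x.2; simp; omega))
        right_inv := fun y => Fin.ext (by simp) }
    have key : ∀ (π : Equiv.Perm (Fin (2*n))), (∀ i, ((π i : ℕ) < n ↔ f (a i))) →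
        ∀ x : Fin (2*n), ((x:ℕ) < n ↔ (((π₀.symm.trans π) x : ℕ) < n)) := by
      intro π hπ x
      have h1 := hπ (π₀.symm x)
      have h2 := h₀ (π₀.symm x)
      simp only [Equiv.trans_apply]
      rw [h1, ← h2, Equiv.apply_symm_apply]
    let Φ : {π // π ∈ T} →
        Equiv.Perm {x : Fin (2*n) // (x:ℕ) < n} × Equiv.Perm {x : Fin (2*n) // ¬ ((x:ℕ) < n)} :=
      fun p =>
        have hp : ∀ i, (((p.1) i : ℕ) < n ↔ f (a i)) := (Finset.mem_filter.mp p.2).2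
        (Equiv.Perm.subtypePerm (π₀.symm.trans p.1) (fun x => (key p.1 hp x).symm),
         Equiv.Perm.subtypePerm (π₀.symm.trans p.1) (fun x => not_iff_not.mpr (key p.1 hp x).symm))
    have hΦ : Function.Injective Φ := by
      intro p q hpq
      have hσ : ∀ x : Fin (2*n), (π₀.symm.trans p.1) x = (π₀.symm.trans q.1) x := by
        intro x
        by_cases hx : (x : ℕ) < n
        · have h1 : (Φ p).1 ⟨x, hx⟩ = (Φ q).1 ⟨x, hx⟩ := by rw [hpq]
          have := Subtype.ext_iff.mp h1
          simpa [Φ, Equiv.Perm.subtypePerm_apply] using this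
        · have h1 : (Φ p).2 ⟨x, hx⟩ = (Φ q).2 ⟨x, hx⟩ := by rw [hpq]
          have := Subtype.ext_iff.mp h1
          simpa [Φ, Equiv.Perm.subtypePerm_apply] using this
      apply Subtype.ext
      apply Equiv.ext
      intro x
      have := hσ (π₀ x)
      simpa using this
    calc T.card = Fintype.card {π // π ∈ T} := (Fintype.card_coe T).symm
      _ ≤ Fintype.card (Equiv.Perm {x : Fin (2*n) // (x:ℕ) < n} ×
            Equiv.Perm {x : Fin (2*n) // ¬ ((x:ℕ) < n)}) := Fintype.card_le_of_injective Φ hΦ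
      _ = n.factorial * n.factorial := by
          rw [Fintype.card_prod, Fintype.card_perm, Fintype.card_perm,
            Fintype.card_congr e₁, Fintype.card_congr e₂, Fintype.card_fin]

theorem stmt_11 {A : Type} [Fintype A] (k : ℕ) (hk : Fintype.card A = k)
    (n : ℕ) (hn : 0 < n) (a : Fin (2 * n) → A) :
    Set.ncard {π : Equiv.Perm (Fin (2 * n)) | ∀ i j : Fin (2 * n), a i = a j →
        (((π i : ℕ) < n ∧ (π j : ℕ) < n) ∨ (n ≤ (π i : ℕ) ∧ n ≤ (π j : ℕ)))}
      ≤ n.factorial * n.factorial * 2 ^ k := by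
  classical
  set P := {π : Equiv.Perm (Fin (2 * n)) | ∀ i j : Fin (2 * n), a i = a j →
        (((π i : ℕ) < n ∧ (π j : ℕ) < n) ∨ (n ≤ (π i : ℕ) ∧ n ≤ (π j : ℕ)))} with hP
  let Tf : (A → Bool) → Finset (Equiv.Perm (Fin (2*n))) := fun f =>
    Finset.univ.filter (fun π => ∀ i, ((π i : ℕ) < n ↔ f (a i)))
  have hsub : P.toFinset ⊆ (Finset.univ : Finset (A → Bool)).biUnion Tf := by
    intro π hπ
    have hπP : π ∈ P := Set.mem_toFinset.mp hπ
    rw [Finset.mem_biUnion]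
    refine ⟨fun x => decide (∃ i, a i = x ∧ (π i : ℕ) < n), Finset.mem_univ _, ?_⟩
    simp only [Tf, Finset.mem_filter, Finset.mem_univ, true_and]
    intro i
    simp only [decide_eq_true_eq]
    constructor
    · intro h; exact ⟨i, rfl, h⟩
    · rintro ⟨j, hji, hj⟩
      rcases hπP i j hji.symm with ⟨h1, h2⟩ | ⟨h1, h2⟩
      · exact h1
      · omega
  have h1 : P.ncard = P.toFinset.card := Set.ncard_eq_toFinset_card' P
  rw [h1]
  calc P.toFinset.card ≤ ((Finset.univ : Finset (A → Bool)).biUnion Tf).card :=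
        Finset.card_le_card hsub
    _ ≤ ∑ f : A → Bool, (Tf f).card := Finset.card_biUnion_le
    _ ≤ ∑ _f : A → Bool, n.factorial * n.factorial := by
        exact Finset.sum_le_sum (fun f _ => half_bound n a f)
    _ = 2 ^ k * (n.factorial * n.factorial) := by
        rw [Finset.sum_const, Finset.card_univ, smul_eq_mul]
        congr 1
        rw [Fintype.card_fun, Fintype.card_bool, hk]
    _ = n.factorial * n.factorial * 2 ^ k := by ring
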